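/- The intersection of two pattern languages Patt(a₁,...,a_d) and Patt(b₁,...,b_l) equals the (finite) union of pattern languages Patt(w) over all w in the set of shortest common superwords of a₁...a_d and b₁...b_l; in particular, the intersection of two pattern languages is a generalized pattern language, and the class of generalized pattern languages is closed under finite intersection. -/

import Mathlib

variable {α : Type*}

/-- The full language `Σ*` of all words over the alphabet `α`. -/
def sigmaStar : Language α := Set.univ

/-- The pattern language `Σ*·a₁·Σ*·a₂·Σ*···Σ*·a_d·Σ*` determined by the symbols
`a₁, …, a_d`. -/
def pattLang : List α → Language α
  | [] => sigmaStar
  | a :: as => sigmaStar * ({[a]} * pattLang as)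
/-- A generalized pattern language is a finite union of languages, each of which is
`∅`, `{ε}`, or a pattern language. -/
def IsGenPatt (L : Language α) : Prop :=
  ∃ Ls : List (Language α),
    (∀ M ∈ Ls, M = ((∅ : Set (List α)) : Language α) ∨ M = ({[]} : Language α) ∨
      ∃ as : List α, M = pattLang as) ∧
    L = {w : List α | ∃ M ∈ Ls, w ∈ M}

/-- `scs u v` is the set of shortest common superwords of `u` and `v`: words `w` having both
`u` and `v` as subsequences, no strict subsequence of which has both as subsequences. -/
def scs (u v : List α) : Set (List α) :=
  {w | u.Sublist w ∧ v.Sublist w ∧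
    ∀ w' : List α, w'.Sublist w → w' ≠ w → ¬ (u.Sublist w' ∧ v.Sublist w')}

lemma exists_decomp {a : α} {as w : List α} (h : (a :: as).Sublist w) :
    ∃ u v, w = u ++ a :: v ∧ as.Sublist v := by
  induction w with
  | nil => simp at h
  | cons c w ih =>
    cases h with
    | cons _ h' =>
      obtain ⟨u, v, rfl, hv⟩ := ih h'
      exact ⟨c :: u, v, rfl, hv⟩
    | cons_cons _ h' => exact ⟨[], w, rfl, h'⟩

lemma pattLang_eq : ∀ as : List α, pattLang as = {w | as.Sublist w} := by
  intro as
  induction as with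
  | nil =>
    ext w; simp [pattLang, sigmaStar, List.nil_sublist]
  | cons a as ih =>
    ext w
    simp only [pattLang, Language.mem_mul, Set.mem_setOf_eq, Set.mem_singleton_iff, ih]
    constructor
    · rintro ⟨u, -, _, ⟨c, rfl, v, hv, rfl⟩, rfl⟩
      exact ((List.cons_sublist_cons.mpr hv).trans (List.sublist_append_right u _))
    · intro h
      obtain ⟨u, v, rfl, hv⟩ := exists_decomp h
      exact ⟨u, trivial, [a] ++ v, ⟨[a], rfl, v, hv, rfl⟩, rfl⟩

lemma exists_min_superword :
    ∀ (w as bs : List α), as.Sublist w → bs.Sublist w →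
    ∃ w', w'.Sublist w ∧ as.Sublist w' ∧ bs.Sublist w' ∧
      w'.length ≤ as.length + bs.length ∧ ∀ x ∈ w', x ∈ as ∨ x ∈ bs := by
  intro w
  induction w with
  | nil =>
    intro as bs ha hb
    rw [List.sublist_nil] at ha hb; subst ha; subst hb
    exact ⟨[], by simp⟩
  | cons c w ih =>
    intro as bs ha hb
    cases ha with
    | cons _ ha' =>
      cases hb with
      | cons _ hb' =>
        obtain ⟨w', h1, h2, h3, h4, h5⟩ := ih as bs ha' hb'
        exact ⟨w', h1.trans (List.sublist_cons_self c w), h2, h3, h4, h5⟩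
      | cons_cons _ hb' =>
        rename_i bs'
        obtain ⟨w', h1, h2, h3, h4, h5⟩ := ih as bs' ha' hb'
        refine ⟨c :: w', List.cons_sublist_cons.mpr h1, h2.cons c,
          List.cons_sublist_cons.mpr h3, by simp only [List.length_cons]; omega, ?_⟩
        intro x hx
        rcases List.mem_cons.mp hx with rfl | hx
        · exact Or.inr List.mem_cons_self
        · rcases h5 x hx with h | h
          exacts [Or.inl h, Or.inr (List.mem_cons_of_mem c h)]
    | cons_cons _ ha' =>
      rename_i as'
      cases hb with
      | cons _ hb' =>
        obtain ⟨w', h1, h2, h3, h4, h5⟩ := ih as' bs ha' hb'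
        refine ⟨c :: w', List.cons_sublist_cons.mpr h1, List.cons_sublist_cons.mpr h2,
          h3.cons c, by simp only [List.length_cons]; omega, ?_⟩
        intro x hx
        rcases List.mem_cons.mp hx with rfl | hx
        · exact Or.inl List.mem_cons_self
        · rcases h5 x hx with h | h
          exacts [Or.inl (List.mem_cons_of_mem c h), Or.inr h]
      | cons_cons _ hb' =>
        rename_i bs'
        obtain ⟨w', h1, h2, h3, h4, h5⟩ := ih as' bs' ha' hb'
        refine ⟨c :: w', List.cons_sublist_cons.mpr h1, List.cons_sublist_cons.mpr h2,
          List.cons_sublist_cons.mpr h3, by simp only [List.length_cons]; omega, ?_⟩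
        intro x hx
        rcases List.mem_cons.mp hx with rfl | hx
        · exact Or.inl List.mem_cons_self
        · rcases h5 x hx with h | h
          exacts [Or.inl (List.mem_cons_of_mem c h), Or.inr (List.mem_cons_of_mem c h)]

lemma scs_bounds {as bs w : List α} (h : w ∈ scs as bs) :
    w.length ≤ as.length + bs.length ∧ ∀ x ∈ w, x ∈ as ∨ x ∈ bs := by
  obtain ⟨ha, hb, hmin⟩ := h
  obtain ⟨w', h1, h2, h3, h4, h5⟩ := exists_min_superword w as bs ha hb
  have : w' = w := by
    by_contra hne
    exact hmin w' h1 hne ⟨h2, h3⟩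
  subst this
  exact ⟨h4, h5⟩

/-- Lists of length at most `n` with entries in `l`. -/
def allLists (l : List α) : ℕ → List (List α)
  | 0 => [[]]
  | n + 1 => [] :: (allLists l n).flatMap fun t => l.map (· :: t)

lemma mem_allLists {l : List α} : ∀ {n : ℕ} {w : List α},
    w ∈ allLists l n ↔ w.length ≤ n ∧ ∀ x ∈ w, x ∈ l := by
  intro n
  induction n with
  | zero =>
    intro w
    simp only [allLists, List.mem_singleton]
    constructor
    · rintro rfl; simp
    · rintro ⟨h, -⟩; exact List.eq_nil_of_length_eq_zero (Nat.le_zero.mp h)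
  | succ n ih =>
    intro w
    simp only [allLists, List.mem_cons, List.mem_flatMap, List.mem_map]
    constructor
    · rintro (rfl | ⟨t, ht, a, hal, rfl⟩)
      · simp
      · obtain ⟨h1, h2⟩ := ih.mp ht
        refine ⟨by simpa using h1, ?_⟩
        intro x hx
        rcases List.mem_cons.mp hx with rfl | hx
        exacts [hal, h2 x hx]
    · rintro ⟨h1, h2⟩
      match w with
      | [] => exact Or.inl rfl
      | a :: t =>
        refine Or.inr ⟨t, ih.mpr ⟨by simpa using h1, fun x hx => h2 x (List.mem_cons_of_mem a hx)⟩,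
          a, h2 a List.mem_cons_self, rfl⟩

lemma patt_inter_eq (as bs : List α) :
    (((pattLang as : Set (List α)) ∩ (pattLang bs : Set (List α))) : Set (List α))
      = ⋃ w ∈ scs as bs, (pattLang w : Set (List α)) := by
  classical
  ext x
  simp only [Set.mem_inter_iff, Set.mem_iUnion, pattLang_eq, Set.mem_setOf_eq]
  constructor
  · rintro ⟨ha, hb⟩
    have hP : ∃ n, ∃ w : List α, w.Sublist x ∧ as.Sublist w ∧ bs.Sublist w ∧ w.length = n :=
      ⟨x.length, x, List.Sublist.refl x, ha, hb, rfl⟩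
    obtain ⟨w, hwx, hwa, hwb, hlen⟩ := Nat.find_spec hP
    refine ⟨w, ⟨hwa, hwb, ?_⟩, hwx⟩
    rintro w' hs hne ⟨ha', hb'⟩
    have hlt : w'.length < w.length := by
      rcases Nat.lt_or_ge w'.length w.length with h | h
      · exact h
      · exact absurd (hs.eq_of_length (le_antisymm hs.length_le h)) hne
    exact Nat.find_min hP (hlen ▸ hlt) ⟨w', hs.trans hwx, ha', hb', rfl⟩
  · rintro ⟨w, hw, hwx⟩
    exact ⟨hw.1.trans hwx, hw.2.1.trans hwx⟩

lemma isGenPatt_patt_inter (as bs : List α) :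
    IsGenPatt (((pattLang as : Set (List α)) ∩ (pattLang bs : Set (List α)) : Set (List α))) := by
  classical
  refine ⟨((allLists (as ++ bs) (as.length + bs.length)).filter
      (fun w => decide (w ∈ scs as bs))).map pattLang, ?_, ?_⟩
  · intro M hM
    simp only [List.mem_map] at hM
    obtain ⟨w, -, rfl⟩ := hM
    exact Or.inr (Or.inr ⟨w, rfl⟩)
  · refine Eq.trans (patt_inter_eq as bs) ?_
    ext x
    constructor
    · intro hx
      obtain ⟨w, hw, hxw⟩ := Set.mem_iUnion₂.mp hx
      obtain ⟨hl, he⟩ := scs_bounds hw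
      refine ⟨pattLang w, List.mem_map.mpr ⟨w, List.mem_filter.mpr ⟨?_, ?_⟩, rfl⟩, hxw⟩
      · exact mem_allLists.mpr ⟨hl, fun y hy => List.mem_append.mpr (he y hy)⟩
      · exact decide_eq_true_iff.mpr hw
    · rintro ⟨M, hM, hx⟩
      obtain ⟨w, hwf, rfl⟩ := List.mem_map.mp hM
      have hw : w ∈ scs as bs := decide_eq_true_iff.mp (List.mem_filter.mp hwf).2
      exact Set.mem_iUnion₂.mpr ⟨w, hw, hx⟩

lemma isGenPatt_union_list (Ps : List (Language α)) (h : ∀ P ∈ Ps, IsGenPatt P) :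
    IsGenPatt {w : List α | ∃ P ∈ Ps, w ∈ P} := by
  induction Ps with
  | nil => exact ⟨[], by simp, by ext w; simp⟩
  | cons P Ps ih =>
    obtain ⟨Ls₁, h1, e1⟩ := h P List.mem_cons_self
    obtain ⟨Ls₂, h2, e2⟩ := ih fun Q hQ => h Q (List.mem_cons_of_mem P hQ)
    refine ⟨Ls₁ ++ Ls₂, ?_, ?_⟩
    · intro M hM
      rcases List.mem_append.mp hM with hM | hM
      exacts [h1 M hM, h2 M hM]
    · ext w
      simp only [Set.mem_setOf_eq, List.mem_cons, List.mem_append]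
      constructor
      · rintro ⟨Q, (rfl | hQ), hw⟩
        · rw [e1] at hw
          obtain ⟨M, hM, hw⟩ := hw
          exact ⟨M, Or.inl hM, hw⟩
        · have : w ∈ ({v : List α | ∃ P ∈ Ps, v ∈ P} : Language α) := ⟨Q, hQ, hw⟩
          rw [e2] at this
          obtain ⟨M, hM, hw⟩ := this
          exact ⟨M, Or.inr hM, hw⟩
      · rintro ⟨M, (hM | hM), hw⟩
        · refine ⟨P, Or.inl rfl, ?_⟩
          rw [e1]; exact ⟨M, hM, hw⟩
        · have : w ∈ ({v : List α | ∃ P ∈ Ps, v ∈ P} : Language α) := by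
            rw [e2]; exact ⟨M, hM, hw⟩
          obtain ⟨Q, hQ, hw⟩ := this
          exact ⟨Q, Or.inr hQ, hw⟩

lemma isGenPatt_empty : IsGenPatt ((∅ : Set (List α)) : Language α) :=
  ⟨[], by simp, by ext w; simp⟩

lemma isGenPatt_eps : IsGenPatt (({[]} : Set (List α)) : Language α) :=
  ⟨[({[]} : Set (List α))], fun M hM => Or.inr (Or.inl (List.mem_singleton.mp hM)),
    Set.ext fun w => ⟨fun h => ⟨_, List.mem_singleton_self _, h⟩, fun ⟨M, hM, h⟩ => by
      rw [List.mem_singleton.mp hM] at h; exact h⟩⟩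

lemma isGenPatt_eps_inter_patt (as : List α) :
    IsGenPatt ((({[]} : Set (List α)) ∩ (pattLang as : Set (List α)) : Set (List α))) := by
  match as with
  | [] =>
    have : ((({[]} : Set (List α)) ∩ (pattLang ([] : List α) : Set (List α))) : Set (List α)) =
        ({[]} : Set (List α)) := by
      ext w; simp [pattLang, sigmaStar]
    rw [this]; exact isGenPatt_eps
  | a :: as =>
    have : ((({[]} : Set (List α)) ∩ (pattLang (a :: as) : Set (List α))) : Set (List α)) =
        (∅ : Set (List α)) := by
      ext w
      simp only [pattLang_eq, Set.mem_inter_iff, Set.mem_singleton_iff, Set.mem_setOf_eq,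
        Set.mem_empty_iff_false, iff_false, not_and]
      rintro rfl h
      simp at h
    rw [this]; exact isGenPatt_empty

lemma isGenPatt_atom_inter (M₁ M₂ : Language α)
    (h1 : M₁ = ((∅ : Set (List α)) : Language α) ∨ M₁ = ({[]} : Language α) ∨
      ∃ as : List α, M₁ = pattLang as)
    (h2 : M₂ = ((∅ : Set (List α)) : Language α) ∨ M₂ = ({[]} : Language α) ∨
      ∃ as : List α, M₂ = pattLang as) :
    IsGenPatt (((M₁ : Set (List α)) ∩ (M₂ : Set (List α)) : Set (List α))) := by
  rcases h1 with rfl | rfl | ⟨as, rfl⟩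
  · exact (congrArg (@IsGenPatt α) (Set.empty_inter _)).mpr isGenPatt_empty
  · rcases h2 with rfl | rfl | ⟨bs, rfl⟩
    · exact (congrArg (@IsGenPatt α) (Set.inter_empty _)).mpr isGenPatt_empty
    · exact (congrArg (@IsGenPatt α) (Set.inter_self _)).mpr isGenPatt_eps
    · exact isGenPatt_eps_inter_patt bs
  · rcases h2 with rfl | rfl | ⟨bs, rfl⟩
    · exact (congrArg (@IsGenPatt α) (Set.inter_empty _)).mpr isGenPatt_empty
    · exact (congrArg (@IsGenPatt α) (Set.inter_comm _ _)).mpr (isGenPatt_eps_inter_patt as)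
    · exact isGenPatt_patt_inter as bs

theorem pattLang_inter (as bs : List α) :
    (((pattLang as : Set (List α)) ∩ (pattLang bs : Set (List α)) : Set (List α))
        = (⋃ w ∈ scs as bs, (pattLang w : Set (List α)))) ∧
    IsGenPatt (((pattLang as : Set (List α)) ∩ (pattLang bs : Set (List α)) : Set (List α))) ∧
    (∀ L₁ L₂ : Language α, IsGenPatt L₁ → IsGenPatt L₂ →
      IsGenPatt (((L₁ : Set (List α)) ∩ (L₂ : Set (List α)) : Set (List α)))) := by
  refine ⟨patt_inter_eq as bs, isGenPatt_patt_inter as bs, ?_⟩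
  rintro L₁ L₂ ⟨Ls₁, h1, e1⟩ ⟨Ls₂, h2, e2⟩
  have key : (((L₁ : Set (List α)) ∩ (L₂ : Set (List α))) : Set (List α))
      = {w : List α | ∃ P ∈ (Ls₁ ×ˢ Ls₂).map
          (fun p : Language α × Language α =>
            (((p.1 : Set (List α)) ∩ (p.2 : Set (List α)) : Set (List α)) : Language α)), w ∈ P} := by
    ext w
    simp only [Set.mem_inter_iff, Set.mem_setOf_eq, List.mem_map]
    constructor
    · rintro ⟨hw1, hw2⟩
      rw [e1] at hw1; rw [e2] at hw2
      obtain ⟨M₁, hM₁, hw1⟩ := hw1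
      obtain ⟨M₂, hM₂, hw2⟩ := hw2
      exact ⟨_, ⟨(M₁, M₂), List.pair_mem_product.mpr ⟨hM₁, hM₂⟩, rfl⟩, hw1, hw2⟩
    · rintro ⟨P, ⟨⟨M₁, M₂⟩, hp, rfl⟩, hw1, hw2⟩
      obtain ⟨hM₁, hM₂⟩ := List.pair_mem_product.mp hp
      constructor
      · rw [e1]; exact ⟨M₁, hM₁, hw1⟩
      · rw [e2]; exact ⟨M₂, hM₂, hw2⟩
  rw [key]
  apply isGenPatt_union_list
  intro P hP
  obtain ⟨⟨M₁, M₂⟩, hp, rfl⟩ := List.mem_map.mp hP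
  obtain ⟨hM₁, hM₂⟩ := List.pair_mem_product.mp hp
  exact isGenPatt_atom_inter M₁ M₂ (h1 M₁ hM₁) (h2 M₂ hM₂)
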